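/- arXiv:2002.12722 — 4 statements merged into one kernel-verified Lean document; each statement's English description precedes it below -/
import Mathlib

section
/- The unique invariant probability distribution λ of the irreducible finite-state Markov chain (Z_n) satisfies, for every i ∈ L, λ_i = (Σ_{g∈G(i)} π(g)) / (Σ_{j∈L} Σ_{g∈G(j)} π(g)); in particular the denominator Σ_{j∈L} Σ_{g∈G(j)} π(g) is strictly positive. -/
open scoped ENNReal Classical

namespace FW

/-- `g` represents a `W`-graph on `Fin l`: the arrows are `i → g i` for `i ∉ W`
(we normalize `g i = i` on `W`); every `i ∉ W` is the initial point of exactly one arrow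
`i → g i` with `g i ≠ i`, and from every `i ∉ W` the arrows lead to some point of `W`. -/
def IsWGraph {l : ℕ} (W : Finset (Fin l)) (g : Fin l → Fin l) : Prop :=
  (∀ i ∈ W, g i = i) ∧ ∀ i ∉ W, g i ≠ i ∧ ∃ n : ℕ, g^[n] i ∈ W

/-- `Σ_{g ∈ G(W)} π(g)` where `π(g) = ∏_{(i→j) ∈ g} p_{ij}`. -/
noncomputable def graphSum {l : ℕ} (p : Fin l → Fin l → ℝ≥0∞) (W : Finset (Fin l)) : ℝ≥0∞ :=
  ∑ g ∈ Finset.univ.filter (IsWGraph W), ∏ i ∈ Wᶜ, p i (g i)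

/-- `n`-step transition probabilities. -/
noncomputable def matPow {l : ℕ} (p : Fin l → Fin l → ℝ≥0∞) : ℕ → Fin l → Fin l → ℝ≥0∞
  | 0 => fun i j => if i = j then 1 else 0
  | n + 1 => fun i j => ∑ k, matPow p n i k * p k j

/-- Irreducibility of the transition matrix `p`. -/
def Irreducible {l : ℕ} (p : Fin l → Fin l → ℝ≥0∞) : Prop :=
  ∀ i j : Fin l, ∃ n : ℕ, 0 < matPow p n i j

open Finset

lemma reach_transfer {α : Type*} (f f' : α → α) (t : α)
    (hagree : ∀ x, x ≠ t → f' x = f x) :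
    ∀ n m, f^[n] m = t → ∃ k, f'^[k] m = t := by
  intro n
  induction n with
  | zero => intro m hm; exact ⟨0, hm⟩
  | succ n ih =>
    intro m hm
    by_cases hmt : m = t
    · exact ⟨0, hmt⟩
    · rw [Function.iterate_succ_apply] at hm
      obtain ⟨k, hk⟩ := ih (f m) hm
      exact ⟨k + 1, by rw [Function.iterate_succ_apply, hagree m hmt]; exact hk⟩

noncomputable def cpred {l : ℕ} (h : Fin l → Fin l) (j : Fin l) : Fin l :=
  if H : ∃ n, h^[n+1] j = j then h^[Nat.find H] j else j

lemma cpred_orbit {l : ℕ} (h : Fin l → Fin l) (j : Fin l) (H : ∃ n, h^[n+1] j = j) :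
    ∃ n, h^[n] j = cpred h j := by
  rw [cpred, dif_pos H]; exact ⟨Nat.find H, rfl⟩

lemma cpred_apply {l : ℕ} (h : Fin l → Fin l) (j : Fin l) (H : ∃ n, h^[n+1] j = j) :
    h (cpred h j) = j := by
  rw [cpred, dif_pos H]
  have := Nat.find_spec H
  rwa [Function.iterate_succ_apply'] at this

lemma iterate_mul_period {α : Type*} (h : α → α) (j : α) (c : ℕ) (hc : h^[c] j = j) :
    ∀ q, h^[c * q] j = j := by
  intro q
  induction q with
  | zero => simp
  | succ q ih => rw [Nat.mul_succ, Function.iterate_add_apply, hc, ih]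

lemma cpred_recover {l : ℕ} (h : Fin l → Fin l) (j i : Fin l)
    (hhi : h i = j) (horb : ∃ n, h^[n] j = i) : cpred h j = i := by
  obtain ⟨n, hn⟩ := horb
  have H : ∃ m, h^[m+1] j = j := ⟨n, by rw [Function.iterate_succ_apply', hn, hhi]⟩
  rw [cpred, dif_pos H]
  set c' := Nat.find H with hc'
  have hc : h^[c' + 1] j = j := Nat.find_spec H
  have hmod : n % (c' + 1) + (c' + 1) * (n / (c' + 1)) = n := Nat.mod_add_div n (c' + 1)
  set r := n % (c' + 1) with hr
  have hrlt : r < c' + 1 := Nat.mod_lt _ (Nat.succ_pos c')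
  have hri : h^[r] j = i := by
    rw [← hn, ← hmod, Function.iterate_add_apply,
      iterate_mul_period h j (c' + 1) hc (n / (c' + 1))]
  have hrper : h^[r + 1] j = j := by rw [Function.iterate_succ_apply', hri, hhi]
  have h1 : c' ≤ r := Nat.find_min' H hrper
  have h2 : r = c' := le_antisymm (Nat.lt_succ_iff.mp hrlt) h1
  rw [← h2]; exact hri

section Balance
variable {l : ℕ} (p : Fin l → Fin l → ℝ≥0∞) (j : Fin l)

/-- The set of fixed-point-free functions from which every state reaches `j`. -/
noncomputable def Aset : Finset (Fin l → Fin l) :=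
  Finset.univ.filter (fun h => (∀ i, h i ≠ i) ∧ ∀ i, ∃ n, h^[n] i = j)

lemma mem_Aset {h : Fin l → Fin l} :
    h ∈ Aset (l := l) j ↔ (∀ i, h i ≠ i) ∧ ∀ i, ∃ n, h^[n] i = j := by
  simp [Aset]

lemma sumA_right :
    ∑ h ∈ Aset (l := l) j, ∏ i, p i (h i)
      = graphSum p {j} * ∑ k ∈ ({j} : Finset (Fin l))ᶜ, p j k := by
  rw [graphSum, Finset.sum_mul]
  simp_rw [Finset.mul_sum]
  rw [← Finset.sum_product']
  refine (Finset.sum_bij' (fun gk _ => Function.update gk.1 j gk.2)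
    (fun h _ => (Function.update h j j, h j)) ?_ ?_ ?_ ?_ ?_).symm
  · -- forward membership
    rintro ⟨g, k⟩ hgk
    dsimp only
    rw [Finset.mem_product, Finset.mem_filter, Finset.mem_compl, Finset.mem_singleton] at hgk
    obtain ⟨⟨-, hW⟩, hk⟩ := hgk
    dsimp only at hW hk
    rw [mem_Aset]
    constructor
    · intro i
      by_cases hij : i = j
      · subst hij; rw [Function.update_self]; exact hk
      · rw [Function.update_of_ne hij]
        exact (hW.2 i (by simp [hij])).1
    · intro i
      by_cases hij : i = j
      · exact ⟨0, hij⟩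
      · obtain ⟨n, hn⟩ := (hW.2 i (by simp [hij])).2
        rw [Finset.mem_singleton] at hn
        exact reach_transfer g _ j (fun x hx => Function.update_of_ne hx _ _) n i hn
  · -- backward membership
    intro h hh
    rw [mem_Aset] at hh
    obtain ⟨hfix, hreach⟩ := hh
    rw [Finset.mem_product, Finset.mem_filter, Finset.mem_compl, Finset.mem_singleton]
    dsimp only
    refine ⟨⟨Finset.mem_univ _, ?_, ?_⟩, hfix j⟩
    · intro i hi; rw [Finset.mem_singleton] at hi; subst hi; exact Function.update_self _ _ _
    · intro i hi
      rw [Finset.mem_singleton] at hi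
      refine ⟨by rw [Function.update_of_ne hi]; exact hfix i, ?_⟩
      obtain ⟨n, hn⟩ := hreach i
      obtain ⟨k, hk⟩ := reach_transfer h (Function.update h j j) j
        (fun x hx => Function.update_of_ne hx j h) n i hn
      exact ⟨k, by rw [hk]; exact Finset.mem_singleton_self j⟩
  · -- left inverse
    rintro ⟨g, k⟩ hgk
    rw [Finset.mem_product, Finset.mem_filter] at hgk
    have hgj : g j = j := hgk.1.2.1 j (Finset.mem_singleton_self j)
    have hself : Function.update g j j = g := by
      have := Function.update_eq_self j g
      rwa [hgj] at this
    dsimp only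
    rw [Function.update_idem, Function.update_self, hself]
  · -- right inverse
    intro h _
    show Function.update (Function.update h j j) j (h j) = h
    rw [Function.update_idem]
    exact Function.update_eq_self _ _
  · -- weights
    rintro ⟨g, k⟩ hgk
    dsimp only
    rw [Finset.mem_product, Finset.mem_compl, Finset.mem_singleton] at hgk
    rw [← Finset.prod_mul_prod_compl ({j} : Finset (Fin l))
      (fun m => p m (Function.update g j k m))]
    rw [Finset.prod_singleton, Function.update_self, mul_comm]
    congr 1
    refine Finset.prod_congr rfl fun m hm => ?_
    rw [Finset.mem_compl, Finset.mem_singleton] at hm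
    rw [Function.update_of_ne hm]

lemma sumA_left :
    ∑ h ∈ Aset (l := l) j, ∏ i, p i (h i)
      = ∑ i ∈ ({j} : Finset (Fin l))ᶜ, graphSum p {i} * p i j := by
  simp_rw [graphSum, Finset.sum_mul]
  rw [Finset.sum_sigma']
  refine (Finset.sum_bij'
    (fun (a : Σ _i : Fin l, Fin l → Fin l) (_ : a ∈ (({j} : Finset (Fin l))ᶜ).sigma
        (fun i => Finset.univ.filter (IsWGraph {i}))) => Function.update a.2 a.1 j)
    (fun h _ => ⟨cpred h j, Function.update h (cpred h j) (cpred h j)⟩) ?_ ?_ ?_ ?_ ?_).symm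
  · -- forward membership
    rintro ⟨i, g⟩ ha
    dsimp only
    rw [Finset.mem_sigma, Finset.mem_compl, Finset.mem_singleton, Finset.mem_filter] at ha
    dsimp only at ha
    obtain ⟨hij, -, hW⟩ := ha
    rw [mem_Aset]
    constructor
    · intro m
      by_cases hmi : m = i
      · subst hmi; rw [Function.update_self]; exact fun h => hij h.symm
      · rw [Function.update_of_ne hmi]
        exact (hW.2 m (by simp [hmi])).1
    · intro m
      -- first reach i under update, then jump to j
      have hreachi : ∃ n, (Function.update g i j)^[n] m = i := by
        by_cases hmi : m = i
        · exact ⟨0, hmi⟩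
        · obtain ⟨n, hn⟩ := (hW.2 m (by simp [hmi])).2
          rw [Finset.mem_singleton] at hn
          exact reach_transfer g _ i (fun x hx => Function.update_of_ne hx _ _) n m hn
      obtain ⟨n, hn⟩ := hreachi
      exact ⟨n + 1, by rw [Function.iterate_succ_apply', hn, Function.update_self]⟩
  · -- backward membership
    intro h hh
    rw [mem_Aset] at hh
    obtain ⟨hfix, hreach⟩ := hh
    have H : ∃ n, h^[n+1] j = j := by
      obtain ⟨n, hn⟩ := hreach (h j)
      exact ⟨n, by rw [Function.iterate_succ_apply]; exact hn⟩
    have hci : h (cpred h j) = j := cpred_apply h j H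
    have hij : cpred h j ≠ j := by
      intro e
      have h2 := hci
      rw [e] at h2
      exact hfix j h2
    rw [Finset.mem_sigma, Finset.mem_compl, Finset.mem_singleton, Finset.mem_filter]
    dsimp only
    refine ⟨hij, Finset.mem_univ _, ?_, ?_⟩
    · intro m hm; rw [Finset.mem_singleton] at hm; subst hm; exact Function.update_self _ _ _
    · intro m hm
      rw [Finset.mem_singleton] at hm
      refine ⟨by rw [Function.update_of_ne hm]; exact hfix m, ?_⟩
      have hNi : ∃ N, h^[N] m = cpred h j := by
        obtain ⟨n, hn⟩ := hreach m
        obtain ⟨n', hn'⟩ := cpred_orbit h j H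
        exact ⟨n' + n, by rw [Function.iterate_add_apply, hn, hn']⟩
      obtain ⟨N, hN⟩ := hNi
      obtain ⟨k, hk⟩ := reach_transfer h (Function.update h (cpred h j) (cpred h j)) (cpred h j)
        (fun x hx => Function.update_of_ne hx (cpred h j) h) N m hN
      exact ⟨k, by rw [hk]; exact Finset.mem_singleton_self _⟩
  · -- left inverse
    rintro ⟨i, g⟩ ha
    dsimp only
    rw [Finset.mem_sigma, Finset.mem_compl, Finset.mem_singleton, Finset.mem_filter] at ha
    dsimp only at ha
    obtain ⟨hij, -, hW⟩ := ha
    have hgi : g i = i := hW.1 i (Finset.mem_singleton_self i)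
    have hci : cpred (Function.update g i j) j = i := by
      apply cpred_recover
      · exact Function.update_self _ _ _
      · have hji : j ≠ i := fun e => hij e.symm
        obtain ⟨n, hn⟩ := (hW.2 j (by simp [hji])).2
        rw [Finset.mem_singleton] at hn
        exact reach_transfer g _ i (fun x hx => Function.update_of_ne hx _ _) n j hn
    have hg2 : Function.update (Function.update g i j) i i = g := by
      rw [Function.update_idem]
      have := Function.update_eq_self i g
      rwa [hgi] at this
    rw [hci, hg2]
  · -- right inverse
    intro h hh
    rw [mem_Aset] at hh
    obtain ⟨hfix, hreach⟩ := hh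
    have H : ∃ n, h^[n+1] j = j := by
      obtain ⟨n, hn⟩ := hreach (h j)
      exact ⟨n, by rw [Function.iterate_succ_apply]; exact hn⟩
    have hci : h (cpred h j) = j := cpred_apply h j H
    show Function.update (Function.update h (cpred h j) (cpred h j)) (cpred h j) j = h
    rw [Function.update_idem]
    have h2 := Function.update_eq_self (cpred h j) h
    rwa [hci] at h2
  · -- weights
    rintro ⟨i, g⟩ ha
    dsimp only
    rw [Finset.mem_sigma, Finset.mem_compl, Finset.mem_singleton, Finset.mem_filter] at ha
    dsimp only at ha
    obtain ⟨hij, -, hW⟩ := ha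
    rw [← Finset.prod_mul_prod_compl ({i} : Finset (Fin l))
      (fun m => p m (Function.update g i j m))]
    rw [Finset.prod_singleton, Function.update_self, mul_comm]
    congr 1
    refine Finset.prod_congr rfl fun m hm => ?_
    rw [Finset.mem_compl, Finset.mem_singleton] at hm
    rw [Function.update_of_ne hm]

lemma balance (hrow : ∀ i, ∑ j, p i j = 1) :
    ∑ i, graphSum p {i} * p i j = graphSum p {j} := by
  have hsplit : ∀ f : Fin l → ℝ≥0∞, ∑ i, f i = f j + ∑ i ∈ ({j} : Finset (Fin l))ᶜ, f i := by
    intro f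
    rw [Finset.compl_singleton]
    exact (Finset.add_sum_erase _ f (Finset.mem_univ j)).symm
  rw [hsplit (fun i => graphSum p {i} * p i j), ← sumA_left, sumA_right, ← mul_add,
    ← hsplit (fun k => p j k), hrow, mul_one]

end Balance

lemma matPow_succ' {l : ℕ} (p : Fin l → Fin l → ℝ≥0∞) (n : ℕ) (i j : Fin l) :
    matPow p (n + 1) i j = ∑ k, p i k * matPow p n k j := by
  induction n generalizing j with
  | zero =>
    show ∑ k, (if i = k then (1:ℝ≥0∞) else 0) * p k j = _
    simp [matPow, eq_comm]
  | succ n ih =>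
    show ∑ k, matPow p (n+1) i k * p k j = _
    calc ∑ k, matPow p (n+1) i k * p k j
        = ∑ k, (∑ m, p i m * matPow p n m k) * p k j := by
          simp_rw [ih]
      _ = ∑ m, p i m * ∑ k, matPow p n m k * p k j := by
          simp_rw [Finset.sum_mul, Finset.mul_sum, mul_assoc]
          exact Finset.sum_comm
      _ = ∑ m, p i m * matPow p (n+1) m j := rfl

lemma p_le_one {l : ℕ} {p : Fin l → Fin l → ℝ≥0∞} (hrow : ∀ i, ∑ j, p i j = 1)
    (i j : Fin l) : p i j ≤ 1 := by
  rw [← hrow i]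
  exact Finset.single_le_sum (fun k _ => zero_le) (Finset.mem_univ j)

lemma graphSum_ne_top {l : ℕ} {p : Fin l → Fin l → ℝ≥0∞} (hrow : ∀ i, ∑ j, p i j = 1)
    (W : Finset (Fin l)) : graphSum p W ≠ ⊤ := by
  have : graphSum p W ≤ ∑ _g ∈ Finset.univ.filter (IsWGraph W), (1:ℝ≥0∞) := by
    apply Finset.sum_le_sum
    intro g _
    exact Finset.prod_le_one (fun i _ => zero_le) (fun i _ => p_le_one hrow i (g i))
  refine ne_top_of_le_ne_top ?_ this
  simp

/-- Construction of a positive-weight `{j}`-graph from irreducibility. -/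
lemma graphSum_pos {l : ℕ} {p : Fin l → Fin l → ℝ≥0∞} (hirr : Irreducible p)
    (j : Fin l) : 0 < graphSum p {j} := by
  classical
  set d : Fin l → ℕ := fun i => Nat.find (hirr i j) with hd
  have hd0 : ∀ i, d i = 0 → i = j := by
    intro i hi
    have := Nat.find_spec (hirr i j)
    have hdi : d i = Nat.find (hirr i j) := rfl
    rw [← hdi, hi] at this
    by_contra hne
    simp [matPow, hne] at this
  have hstep : ∀ i, i ≠ j → ∃ k, p i k ≠ 0 ∧ d k < d i := by
    intro i hij
    have hdi : d i ≠ 0 := fun h => hij (hd0 i h)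
    obtain ⟨n, hn⟩ : ∃ n, d i = n + 1 := ⟨d i - 1, by omega⟩
    have hpos : 0 < matPow p (n+1) i j := by rw [← hn]; exact Nat.find_spec (hirr i j)
    rw [matPow_succ'] at hpos
    obtain ⟨k, _, hk⟩ := Finset.exists_ne_zero_of_sum_ne_zero (pos_iff_ne_zero.mp hpos)
    refine ⟨k, fun h => hk (by simp [h]), ?_⟩
    have : matPow p n k j ≠ 0 := fun h => hk (by simp [h])
    have : d k ≤ n := Nat.find_min' (hirr k j) (pos_iff_ne_zero.mpr this)
    omega
  set g : Fin l → Fin l := fun i => if h : i = j then j else Classical.choose (hstep i h)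
    with hg
  have hgj : g j = j := by simp [hg]
  have hgspec : ∀ i, i ≠ j → p i (g i) ≠ 0 ∧ d (g i) < d i := by
    intro i hij
    simp only [hg, dif_neg hij]
    exact Classical.choose_spec (hstep i hij)
  have hreach : ∀ N i, d i ≤ N → ∃ n, g^[n] i = j := by
    intro N
    induction N with
    | zero => intro i hi; exact ⟨0, hd0 i (Nat.le_zero.mp hi)⟩
    | succ N ih =>
      intro i hi
      by_cases hij : i = j
      · exact ⟨0, hij⟩
      · obtain ⟨n, hn⟩ := ih (g i) (by have := (hgspec i hij).2; omega)
        exact ⟨n + 1, by rwa [Function.iterate_succ_apply]⟩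
  have hgW : IsWGraph {j} g := by
    constructor
    · intro i hi; rw [Finset.mem_singleton] at hi; rw [hi]; exact hgj
    · intro i hi
      rw [Finset.mem_singleton] at hi
      refine ⟨fun h => ?_, ?_⟩
      · have := (hgspec i hi).2; rw [h] at this; omega
      · obtain ⟨n, hn⟩ := hreach (d i) i le_rfl
        exact ⟨n, by rw [hn]; exact Finset.mem_singleton_self j⟩
  have hmem : g ∈ Finset.univ.filter (IsWGraph ({j} : Finset (Fin l))) := by
    simp [Finset.mem_filter, hgW]
  have hprodpos : 0 < ∏ i ∈ ({j} : Finset (Fin l))ᶜ, p i (g i) := by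
    rw [CanonicallyOrderedAdd.prod_pos]
    intro i hi
    rw [Finset.mem_compl, Finset.mem_singleton] at hi
    exact pos_iff_ne_zero.mpr (hgspec i hi).1
  calc (0:ℝ≥0∞) < ∏ i ∈ ({j} : Finset (Fin l))ᶜ, p i (g i) := hprodpos
    _ ≤ graphSum p {j} :=
      Finset.single_le_sum (f := fun g => ∏ i ∈ ({j} : Finset (Fin l))ᶜ, p i (g i))
        (fun g _ => zero_le) hmem


lemma sum_eq_of_le {ι : Type*} (s : Finset ι) (a b : ι → ℝ≥0∞)
    (hle : ∀ i ∈ s, a i ≤ b i) (htop : ∑ i ∈ s, b i ≠ ⊤)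
    (heq : ∑ i ∈ s, a i = ∑ i ∈ s, b i) : ∀ i ∈ s, a i = b i := by
  intro i hi
  refine le_antisymm (hle i hi) ?_
  have h1 : ∑ x ∈ s.erase i, a x ≤ ∑ x ∈ s.erase i, b x :=
    Finset.sum_le_sum (fun x hx => hle x (Finset.mem_of_mem_erase hx))
  have hX : ∑ x ∈ s.erase i, a x ≠ ⊤ := by
    refine ne_top_of_le_ne_top htop (h1.trans ?_)
    exact Finset.sum_le_sum_of_subset (Finset.erase_subset i s)
  have key : b i + ∑ x ∈ s.erase i, a x ≤ a i + ∑ x ∈ s.erase i, a x := by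
    calc b i + ∑ x ∈ s.erase i, a x ≤ b i + ∑ x ∈ s.erase i, b x :=
          add_le_add_right h1 _
      _ = ∑ x ∈ s, b x := Finset.add_sum_erase s b hi
      _ = ∑ x ∈ s, a x := heq.symm
      _ = a i + ∑ x ∈ s.erase i, a x := (Finset.add_sum_erase s a hi).symm
  exact (ENNReal.add_le_add_iff_right hX).mp key


/-- The unique invariant probability distribution `λ` of an irreducible
finite-state Markov chain with transition probabilities `p` satisfies, for every state `i`,
`λ_i = (Σ_{g∈G(i)} π(g)) / (Σ_{j} Σ_{g∈G(j)} π(g))`; in particular the denominator is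
strictly positive. -/
theorem invariant_eq_graphSum_div {l : ℕ} (hl : 2 ≤ l)
    (p : Fin l → Fin l → ℝ≥0∞) (hrow : ∀ i, ∑ j, p i j = 1)
    (hirr : Irreducible p)
    (lam : Fin l → ℝ≥0∞) (hlam : ∑ i, lam i = 1)
    (hinv : ∀ j, ∑ i, lam i * p i j = lam j) :
    0 < ∑ j, graphSum p {j} ∧
      ∀ i, lam i = graphSum p {i} / ∑ j, graphSum p {j} := by
  have hlpos : 0 < l := by omega
  have j0 : Fin l := ⟨0, hlpos⟩
  set Q : ℝ≥0∞ := ∑ j, graphSum p {j} with hQ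
  have hQpos : 0 < Q :=
    lt_of_lt_of_le (graphSum_pos hirr j0)
      (Finset.single_le_sum (f := fun j => graphSum p {j}) (fun _ _ => zero_le)
        (Finset.mem_univ j0))
  have hQtop : Q ≠ ⊤ := by
    rw [hQ]
    exact (ENNReal.sum_lt_top.mpr (fun j _ => (graphSum_ne_top hrow {j}).lt_top)).ne
  refine ⟨hQpos, ?_⟩
  set μ : Fin l → ℝ≥0∞ := fun i => graphSum p {i} * Q⁻¹ with hμ
  have hptop : ∀ i j, p i j ≠ ⊤ := fun i j =>
    ((p_le_one hrow i j).trans_lt ENNReal.one_lt_top).ne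
  have hμpos : ∀ i, 0 < μ i := fun i =>
    ENNReal.mul_pos (graphSum_pos hirr i).ne' (ENNReal.inv_ne_zero.mpr hQtop)
  have hμtop : ∀ i, μ i ≠ ⊤ :=
    fun i => ENNReal.mul_ne_top (graphSum_ne_top hrow {i}) (ENNReal.inv_ne_top.mpr hQpos.ne')
  have hμsum : ∑ i, μ i = 1 := by
    rw [hμ, ← Finset.sum_mul, ← hQ, ENNReal.mul_inv_cancel hQpos.ne' hQtop]
  have hμinv : ∀ j, ∑ i, μ i * p i j = μ j := by
    intro j
    simp only [hμ]
    calc ∑ i, graphSum p {i} * Q⁻¹ * p i j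
        = (∑ i, graphSum p {i} * p i j) * Q⁻¹ := by
          rw [Finset.sum_mul]; exact Finset.sum_congr rfl fun i _ => by ring
      _ = graphSum p {j} * Q⁻¹ := by rw [balance p j hrow]
  -- minimum of lam/μ
  obtain ⟨jm, -, hmin⟩ := Finset.exists_min_image Finset.univ
    (fun i => lam i * (μ i)⁻¹) ⟨j0, Finset.mem_univ j0⟩
  set m : ℝ≥0∞ := lam jm * (μ jm)⁻¹ with hm
  have hcancel : ∀ i, lam i * (μ i)⁻¹ * μ i = lam i := by
    intro i
    rw [mul_assoc, ENNReal.inv_mul_cancel (hμpos i).ne' (hμtop i), mul_one]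
  have hmle : ∀ i, m * μ i ≤ lam i := by
    intro i
    calc m * μ i ≤ lam i * (μ i)⁻¹ * μ i :=
          mul_le_mul_left (hmin i (Finset.mem_univ i)) _
      _ = lam i := hcancel i
  have hSm : m * μ jm = lam jm := hcancel jm
  -- the set where equality holds is closed under positive one-step predecessors
  have closed : ∀ j, m * μ j = lam j → ∀ i, p i j ≠ 0 → m * μ i = lam i := by
    intro j hSj i hpij
    have hterm : ∀ k ∈ Finset.univ, m * μ k * p k j = lam k * p k j := by
      apply sum_eq_of_le
      · exact fun k _ => mul_le_mul_left (hmle k) _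
      · rw [hinv j]
        exact (lt_of_le_of_lt (le_of_eq (hinv j).symm) (by
          rw [hinv j]
          exact lt_of_le_of_lt (Finset.single_le_sum (f := lam) (fun _ _ => zero_le)
            (Finset.mem_univ j) |>.trans (le_of_eq hlam)) ENNReal.one_lt_top)).ne
      · calc ∑ k, m * μ k * p k j = m * ∑ k, μ k * p k j := by
              rw [Finset.mul_sum]; exact Finset.sum_congr rfl fun k _ => by ring
          _ = m * μ j := by rw [hμinv j]
          _ = lam j := hSj
          _ = ∑ k, lam k * p k j := (hinv j).symm
    have h1 : m * μ i * p i j = lam i * p i j := hterm i (Finset.mem_univ i)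
    have h2 := congrArg (· * (p i j)⁻¹) h1
    simpa [mul_assoc, ENNReal.mul_inv_cancel hpij (hptop i j)] using h2
  have matclosed : ∀ n j, m * μ j = lam j → ∀ k, matPow p n k j ≠ 0 → m * μ k = lam k := by
    intro n
    induction n with
    | zero =>
      intro j hSj k hk
      by_cases hkj : k = j
      · rwa [hkj]
      · exfalso; apply hk; simp [matPow, hkj]
    | succ n ih =>
      intro j hSj k hk
      have : matPow p (n+1) k j = ∑ mm, matPow p n k mm * p mm j := rfl
      rw [this] at hk
      obtain ⟨mm, -, hmm⟩ := Finset.exists_ne_zero_of_sum_ne_zero hk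
      have hf1 : matPow p n k mm ≠ 0 := fun h => hmm (by rw [h, zero_mul])
      have hf2 : p mm j ≠ 0 := fun h => hmm (by rw [h, mul_zero])
      exact ih mm (closed j hSj mm hf2) k hf1
  have hall : ∀ k, m * μ k = lam k := by
    intro k
    obtain ⟨n, hn⟩ := hirr k jm
    exact matclosed n jm hSm k hn.ne'
  have hm1 : m = 1 := by
    have : ∑ i, m * μ i = ∑ i, lam i := Finset.sum_congr rfl fun i _ => hall i
    rw [← Finset.mul_sum, hμsum, mul_one, hlam] at this
    exact this
  intro i
  rw [← hall i, hm1, one_mul, hμ, ENNReal.div_eq_inv_mul, mul_comm]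

end FW
end

section
/- There exists γ₀ ∈ (0,1) such that for every γ ∈ (0,γ₀] and every nonnegative random variable Z with E[Z] = 1 and E[Z²] ≤ 9/4, one has E[e^{−γZ}] · e^{γ/(1+2γ)} ≤ e^{−γ²}. -/
open MeasureTheory

private lemma exp_neg_le_quad {x : ℝ} (hx : 0 ≤ x) : Real.exp (-x) ≤ 1 - x + x^2/2 := by
  have h := Real.quadratic_le_exp_of_nonneg hx
  have hp : (0:ℝ) < Real.exp x := Real.exp_pos x
  have hq : (0:ℝ) ≤ 1 - x + x^2/2 := by nlinarith [sq_nonneg (x-1)]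
  rw [Real.exp_neg, inv_le_iff_one_le_mul₀ hp]
  nlinarith [mul_le_mul_of_nonneg_left h hq, sq_nonneg (x^2)]

private lemma quart_le_exp_neg {s : ℝ} (h0 : 0 ≤ s) (h1 : s ≤ 1) :
    1 - s + s^2/2 - s^3/6 - 5*s^4/96 ≤ Real.exp (-s) := by
  have hb : |(-s)| ≤ 1 := by rw [abs_neg, abs_of_nonneg h0]; exact h1
  have h2 := (abs_sub_le_iff.1 (Real.exp_bound hb (n := 4) (by norm_num))).2
  have hsum : ∑ m ∈ Finset.range 4, (-s) ^ m / (m.factorial : ℝ)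
      = 1 - s + s^2/2 - s^3/6 := by
    norm_num [Finset.sum_range_succ, Nat.factorial]; ring
  rw [abs_neg, abs_of_nonneg h0, hsum] at h2
  norm_num [Nat.factorial] at h2
  linarith

private lemma scalar_ineq {γ : ℝ} (h0 : 0 < γ) (h1 : γ ≤ 1/20) :
    (1 - γ + 9/8*γ^2) * Real.exp (γ / (1 + 2*γ)) ≤ Real.exp (-γ^2) := by
  have ha : (0:ℝ) < 1 + 2*γ := by linarith
  set s : ℝ := γ^2 + γ / (1 + 2*γ) with hs
  have hs0 : 0 ≤ s := by positivity
  clear_value s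
  have hd1 : γ - 2*γ^2 ≤ γ / (1 + 2*γ) := by rw [le_div_iff₀ ha]; nlinarith
  have hd2 : γ / (1 + 2*γ) ≤ γ - 2*γ^2 + 4*γ^3 := by rw [div_le_iff₀ ha]; nlinarith
  have hslb : γ - γ^2 ≤ s := by rw [hs]; linarith
  have hsub : s ≤ γ - γ^2 + 4*γ^3 := by rw [hs]; linarith
  have hs1 : s ≤ 1 := by nlinarith
  have hL : 1 - s + s^2/2 - s^3/6 - 5*s^4/96 ≤ Real.exp (-s) := quart_le_exp_neg hs0 hs1
  have hsγ : s ≤ γ := by nlinarith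
  have hlb0 : (0:ℝ) ≤ γ - γ^2 := by nlinarith
  have h2 : (γ - γ^2)^2 ≤ s^2 := by nlinarith
  have h3 : s^3 ≤ γ^3 := pow_le_pow_left₀ hs0 hsγ 3
  have h4 : s^4 ≤ γ^4 := pow_le_pow_left₀ hs0 hsγ 4
  have hQ : 1 - γ + 9/8*γ^2 ≤ 1 - s + s^2/2 - s^3/6 - 5*s^4/96 := by
    nlinarith [h2, h3, h4, hsub,
      mul_nonneg (mul_nonneg h0.le h0.le) (by linarith : (0:ℝ) ≤ 1/20 - γ),
      sq_nonneg γ, pow_pos h0 4]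
  have key : -γ^2 = γ / (1 + 2*γ) + (-s) := by rw [hs]; ring
  rw [key, Real.exp_add, mul_comm (Real.exp _)]
  exact mul_le_mul_of_nonneg_right (hQ.trans hL) (Real.exp_pos _).le

/-- There exists `γ₀ ∈ (0,1)` such that for every `γ ∈ (0,γ₀]` and every
nonnegative random variable `Z` with `E[Z] = 1` and `E[Z²] ≤ 9/4`, one has
`E[e^{−γZ}] · e^{γ/(1+2γ)} ≤ e^{−γ²}`. -/
theorem exists_gamma_mgf_bound :
    ∃ γ₀ ∈ Set.Ioo (0 : ℝ) 1, ∀ γ ∈ Set.Ioc (0 : ℝ) γ₀,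
      ∀ (Ω : Type) [MeasurableSpace Ω] (μ : Measure Ω), IsProbabilityMeasure μ →
        ∀ Z : Ω → ℝ, Measurable Z → (∀ ω, 0 ≤ Z ω) →
          (∫⁻ ω, ENNReal.ofReal (Z ω) ∂μ) = 1 →
          (∫⁻ ω, ENNReal.ofReal (Z ω ^ 2) ∂μ) ≤ 9 / 4 →
          (∫ ω, Real.exp (-γ * Z ω) ∂μ) * Real.exp (γ / (1 + 2 * γ))
            ≤ Real.exp (-γ ^ 2) := by
  refine ⟨1/20, ⟨by norm_num, by norm_num⟩, ?_⟩
  rintro γ ⟨hγ0, hγ1⟩ Ω _ μ hp Z hm hZ h1 h2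
  have hZ2 : ∀ ω, 0 ≤ Z ω ^ 2 := fun ω => sq_nonneg _
  have hiZ : Integrable Z μ := by
    refine ⟨hm.aestronglyMeasurable, ?_⟩
    rw [hasFiniteIntegral_iff_ofReal (Filter.Eventually.of_forall hZ)]
    rw [h1]; exact ENNReal.one_lt_top
  have hiZ2 : Integrable (fun ω => Z ω ^ 2) μ := by
    refine ⟨(hm.pow_const 2).aestronglyMeasurable, ?_⟩
    rw [hasFiniteIntegral_iff_ofReal (Filter.Eventually.of_forall hZ2)]
    exact lt_of_le_of_lt h2 (ENNReal.div_lt_top (by norm_num) (by norm_num))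
  have hEZ : ∫ ω, Z ω ∂μ = 1 := by
    rw [integral_eq_lintegral_of_nonneg_ae (Filter.Eventually.of_forall hZ)
      hm.aestronglyMeasurable, h1, ENNReal.toReal_one]
  have hEZ2 : ∫ ω, Z ω ^ 2 ∂μ ≤ 9/4 := by
    rw [integral_eq_lintegral_of_nonneg_ae (Filter.Eventually.of_forall hZ2)
      (hm.pow_const 2).aestronglyMeasurable]
    calc (∫⁻ ω, ENNReal.ofReal (Z ω ^ 2) ∂μ).toReal
        ≤ ((9:ENNReal)/4).toReal :=
          ENNReal.toReal_mono (ENNReal.div_lt_top (by norm_num) (by norm_num)).ne h2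
      _ = 9/4 := by rw [ENNReal.toReal_div]; norm_num
  have hiexp : Integrable (fun ω => Real.exp (-γ * Z ω)) μ := by
    refine (integrable_const (1:ℝ)).mono' ((hm.const_mul (-γ)).exp).aestronglyMeasurable ?_
    refine Filter.Eventually.of_forall fun ω => ?_
    rw [Real.norm_eq_abs, abs_of_nonneg (Real.exp_pos _).le, Real.exp_le_one_iff]
    have := hZ ω; nlinarith
  have hiRHS : Integrable (fun ω => 1 - γ * Z ω + γ^2 * Z ω ^ 2 / 2) μ := by
    exact ((integrable_const 1).sub (hiZ.const_mul γ)).add ((hiZ2.const_mul (γ^2)).div_const 2)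
  have hmono : (∫ ω, Real.exp (-γ * Z ω) ∂μ) ≤ ∫ ω, (1 - γ * Z ω + γ^2 * Z ω ^ 2 / 2) ∂μ := by
    refine integral_mono hiexp hiRHS fun ω => ?_
    have hx : 0 ≤ γ * Z ω := mul_nonneg hγ0.le (hZ ω)
    have := exp_neg_le_quad hx
    calc Real.exp (-γ * Z ω) = Real.exp (-(γ * Z ω)) := by ring_nf
      _ ≤ 1 - γ * Z ω + (γ * Z ω)^2/2 := this
      _ = 1 - γ * Z ω + γ^2 * Z ω ^ 2 / 2 := by ring
  have hval : ∫ ω, (1 - γ * Z ω + γ^2 * Z ω ^ 2 / 2) ∂μ ≤ 1 - γ + 9/8*γ^2 := by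
    have hA : Integrable (fun ω => 1 - γ * Z ω) μ := by
      exact (integrable_const 1).sub (hiZ.const_mul γ)
    have hB : Integrable (fun ω => γ^2 * Z ω ^ 2 / 2) μ := by
      exact (hiZ2.const_mul (γ^2)).div_const 2
    have hC : Integrable (fun ω => γ * Z ω) μ := by exact hiZ.const_mul γ
    rw [integral_add hA hB, integral_sub (integrable_const 1) hC, integral_const,
      integral_div, integral_const_mul, integral_const_mul, hEZ]
    simp only [measure_univ, probReal_univ, ENNReal.toReal_one, smul_eq_mul, mul_one]
    nlinarith [sq_nonneg γ, hEZ2, mul_pos hγ0 hγ0]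
  have hE : (∫ ω, Real.exp (-γ * Z ω) ∂μ) ≤ 1 - γ + 9/8*γ^2 := le_trans hmono hval
  calc (∫ ω, Real.exp (-γ * Z ω) ∂μ) * Real.exp (γ / (1 + 2 * γ))
      ≤ (1 - γ + 9/8*γ^2) * Real.exp (γ / (1 + 2 * γ)) :=
        mul_le_mul_of_nonneg_right hE (Real.exp_pos _).le
    _ ≤ Real.exp (-γ^2) := scalar_ineq hγ0 hγ1
end

section
/- Let Φ denote the cumulative distribution function of the standard normal distribution N(0,1). For every σ > 0, every real Γ > 0, and every integer K with 1 ≤ K ≤ Γ/2, one has Σ_{k=1}^{K} [ Φ( k/(σ·√(Γ−k)) ) − Φ( k/(σ·√(Γ+k)) ) ] ≤ (6/Γ)·(2 + 3σ²Γ) = 12/Γ + 18σ². -/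
set_option maxHeartbeats 1000000

open MeasureTheory ProbabilityTheory Real Set

/-- The cumulative distribution function `Φ` of the standard normal distribution `N(0,1)`. -/
noncomputable def stdGaussianCDF (y : ℝ) : ℝ :=
  (gaussianReal 0 1 (Set.Iic y)).toReal

lemma pdf_eq (x : ℝ) : gaussianPDFReal 0 1 x = (Real.sqrt (2 * π))⁻¹ * rexp (-x ^ 2 / 2) := by
  simp [gaussianPDFReal]

lemma cdf_diff_le (b a : ℝ) (hb : 0 ≤ b) (hba : b ≤ a) :
    stdGaussianCDF a - stdGaussianCDF b
      ≤ (a - b) * ((Real.sqrt (2 * π))⁻¹ * rexp (-b ^ 2 / 2)) := by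
  have hint : Integrable (gaussianPDFReal 0 1) := integrable_gaussianPDFReal 0 1
  have hnn : ∀ y : ℝ, 0 ≤ ∫ x in Iic y, gaussianPDFReal 0 1 x := fun y =>
    setIntegral_nonneg measurableSet_Iic fun x _ => gaussianPDFReal_nonneg 0 1 x
  have h1 : stdGaussianCDF a - stdGaussianCDF b = ∫ x in Ioc b a, gaussianPDFReal 0 1 x := by
    unfold stdGaussianCDF
    rw [gaussianReal_apply_eq_integral 0 one_ne_zero, gaussianReal_apply_eq_integral 0 one_ne_zero,
      ENNReal.toReal_ofReal (hnn a), ENNReal.toReal_ofReal (hnn b)]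
    rw [← Set.Iic_union_Ioc_eq_Iic hba,
      setIntegral_union (Set.Iic_disjoint_Ioc le_rfl) measurableSet_Ioc
        hint.integrableOn hint.integrableOn]
    ring
  rw [h1]
  calc ∫ x in Ioc b a, gaussianPDFReal 0 1 x
      ≤ ∫ _x in Ioc b a, ((Real.sqrt (2 * π))⁻¹ * rexp (-b ^ 2 / 2)) := by
        apply setIntegral_mono_on hint.integrableOn (integrableOn_const (by
          simp [Real.volume_Ioc]) enorm_ne_top) measurableSet_Ioc
        intro x hx
        rw [pdf_eq]
        apply mul_le_mul_of_nonneg_left _ (by positivity)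
        apply Real.exp_le_exp.2
        have h1 : b ≤ x := hx.1.le
        nlinarith
    _ = (a - b) * ((Real.sqrt (2 * π))⁻¹ * rexp (-b ^ 2 / 2)) := by
        rw [setIntegral_const, Real.volume_real_Ioc_of_le hba, smul_eq_mul]

lemma term_le (σ Γ : ℝ) (hσ : 0 < σ) (hΓ : 0 < Γ) (k : ℕ) (hk1 : 1 ≤ k) (hk2 : (k : ℝ) ≤ Γ / 2) :
    stdGaussianCDF ((k : ℝ) / (σ * Real.sqrt (Γ - (k : ℝ))))
      - stdGaussianCDF ((k : ℝ) / (σ * Real.sqrt (Γ + (k : ℝ))))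
    ≤ (2 * Real.sqrt 2 * (k : ℝ) ^ 2 / (σ * (Γ * Real.sqrt Γ)))
        * ((Real.sqrt (2 * π))⁻¹ * rexp (-(k : ℝ) ^ 2 / (3 * σ ^ 2 * Γ))) := by
  set kk : ℝ := (k : ℝ) with hkk
  have hkk1 : 1 ≤ kk := by rw [hkk]; exact_mod_cast hk1
  have hkk0 : 0 < kk := by linarith
  set s : ℝ := Real.sqrt (Γ - kk) with hs
  set t : ℝ := Real.sqrt (Γ + kk) with ht
  set r : ℝ := Real.sqrt Γ with hr
  have hΓk : (0:ℝ) < Γ - kk := by linarith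
  have hs0 : 0 < s := Real.sqrt_pos.2 hΓk
  have ht0 : 0 < t := Real.sqrt_pos.2 (by linarith)
  have hr0 : 0 < r := Real.sqrt_pos.2 hΓ
  have hs2 : s ^ 2 = Γ - kk := Real.sq_sqrt hΓk.le
  have ht2 : t ^ 2 = Γ + kk := Real.sq_sqrt (by linarith)
  have hr2 : r ^ 2 = Γ := Real.sq_sqrt hΓ.le
  have hst : s ≤ t := Real.sqrt_le_sqrt (by linarith)
  have hrt : r ≤ t := Real.sqrt_le_sqrt (by linarith)
  have h2 : (0:ℝ) < Real.sqrt 2 := Real.sqrt_pos.2 two_pos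
  have h22 : (Real.sqrt 2) ^ 2 = 2 := Real.sq_sqrt two_pos.le
  -- r ≤ √2 * s
  have hrs : r ≤ Real.sqrt 2 * s := by
    rw [hr, hs, ← Real.sqrt_mul two_pos.le]
    exact Real.sqrt_le_sqrt (by linarith)
  -- (t - s) * r ≤ 2 * kk
  have hts : (t - s) * r ≤ 2 * kk := by
    have h := mul_le_mul_of_nonneg_left (by linarith : r ≤ t + s) (by linarith : 0 ≤ t - s)
    nlinarith
  set b : ℝ := kk / (σ * t) with hb
  set a : ℝ := kk / (σ * s) with ha
  have hb0 : 0 ≤ b := by positivity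
  have hba : b ≤ a := by
    apply div_le_div_of_nonneg_left hkk0.le (by positivity)
    nlinarith
  refine (cdf_diff_le b a hb0 hba).trans ?_
  have hC : (0:ℝ) ≤ (Real.sqrt (2 * π))⁻¹ := by positivity
  apply mul_le_mul ?_ ?_ (by positivity) (by positivity)
  · -- a - b ≤ 2√2 kk² / (σ (Γ √Γ))
    have hab : a - b = kk * (t - s) / (σ * (s * t)) := by
      rw [ha, hb]; field_simp
    rw [hab]
    rw [div_le_div_iff₀ (by positivity) (by positivity)]
    have hstr : r ^ 2 ≤ Real.sqrt 2 * (s * t) := by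
      have := mul_le_mul hrs hrt hr0.le (by positivity : (0:ℝ) ≤ Real.sqrt 2 * s)
      nlinarith
    have hΓr : Γ * Real.sqrt Γ = r ^ 2 * r := by rw [hr2]
    rw [hΓr]
    calc kk * (t - s) * (σ * (r ^ 2 * r)) = (σ * kk * r ^ 2) * ((t - s) * r) := by ring
      _ ≤ (σ * kk * r ^ 2) * (2 * kk) := by
          exact mul_le_mul_of_nonneg_left hts (by positivity)
      _ = (2 * kk ^ 2 * σ) * r ^ 2 := by ring
      _ ≤ (2 * kk ^ 2 * σ) * (Real.sqrt 2 * (s * t)) := by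
          exact mul_le_mul_of_nonneg_left hstr (by positivity)
      _ = 2 * Real.sqrt 2 * kk ^ 2 * (σ * (s * t)) := by ring
  · apply mul_le_mul_of_nonneg_left _ hC
    apply Real.exp_le_exp.2
    rw [hb, div_pow, mul_pow, ht2, neg_div, neg_div, neg_le_neg_iff, div_div,
      div_le_div_iff₀ (by positivity) (by positivity)]
    nlinarith [mul_le_mul_of_nonneg_left (show 2 * (Γ + kk) ≤ 3 * Γ by linarith)
      (by positivity : (0:ℝ) ≤ kk ^ 2 * σ ^ 2)]

-- step: single-k bound: k² e^{-k²/c} ≤ ∫_{k-1..k} (9/4) x² e^{-x²/c}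
lemma step_k (c : ℝ) (hc : 0 < c) (k : ℕ) (hk : 3 ≤ k) :
    (k : ℝ) ^ 2 * rexp (-(k : ℝ) ^ 2 / c)
      ≤ ∫ x in ((k : ℝ) - 1)..(k : ℝ), (9 / 4) * (x ^ 2 * rexp (-x ^ 2 / c)) := by
  have hk3 : (3 : ℝ) ≤ (k : ℝ) := by exact_mod_cast hk
  have hcont : Continuous fun x : ℝ => (9 / 4 : ℝ) * (x ^ 2 * rexp (-x ^ 2 / c)) := by
    continuity
  have h1 : (k : ℝ) ^ 2 * rexp (-(k : ℝ) ^ 2 / c)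
      = ∫ _x in ((k : ℝ) - 1)..(k : ℝ), ((k : ℝ) ^ 2 * rexp (-(k : ℝ) ^ 2 / c)) := by
    rw [intervalIntegral.integral_const]
    simp
  rw [h1]
  apply intervalIntegral.integral_mono_on (by linarith)
    (intervalIntegrable_const) (hcont.intervalIntegrable _ _)
  intro x hx
  obtain ⟨hx1, hx2⟩ := hx
  have hx0 : (0 : ℝ) < x := by linarith
  have hkx : (k : ℝ) ≤ (3 / 2) * x := by linarith
  have e1 : (k : ℝ) ^ 2 ≤ (9 / 4) * x ^ 2 := by nlinarith
  have e2 : rexp (-(k : ℝ) ^ 2 / c) ≤ rexp (-x ^ 2 / c) := by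
    apply Real.exp_le_exp.2
    rw [div_le_div_iff_of_pos_right hc] <;> nlinarith
  calc (k : ℝ) ^ 2 * rexp (-(k : ℝ) ^ 2 / c) ≤ ((9 / 4) * x ^ 2) * rexp (-x ^ 2 / c) := by
        apply mul_le_mul e1 e2 (by positivity) (by positivity)
    _ = (9 / 4) * (x ^ 2 * rexp (-x ^ 2 / c)) := by ring

lemma gauss_int_le (c : ℝ) (hc : 0 < c) (A B : ℝ) (hAB : 0 ≤ A) (h2 : A ≤ B) :
    ∫ x in A..B, rexp (-x ^ 2 / c) ≤ Real.sqrt (π * c) / 2 := by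
  have hfun : ∀ x : ℝ, rexp (-x ^ 2 / c) = rexp (-c⁻¹ * x ^ 2) := by
    intro x; congr 1; field_simp
  have hint : IntegrableOn (fun x : ℝ => rexp (-x ^ 2 / c)) (Ioi 0) := by
    simp_rw [hfun]
    exact (integrable_exp_neg_mul_sq (by positivity)).integrableOn
  rw [intervalIntegral.integral_of_le h2]
  calc (∫ x in Ioc A B, rexp (-x ^ 2 / c))
      ≤ ∫ x in Ioi 0, rexp (-x ^ 2 / c) := by
        apply setIntegral_mono_set hint (Filter.Eventually.of_forall fun x => by positivity)
        apply Filter.Eventually.of_forall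
        intro x hx
        exact lt_of_le_of_lt hAB hx.1
    _ = Real.sqrt (π * c) / 2 := by
        simp_rw [hfun]
        rw [integral_gaussian_Ioi]
        congr 2
        field_simp
lemma deriv_F (c : ℝ) (hc : 0 < c) (x : ℝ) :
    HasDerivAt (fun y : ℝ => -(c / 2) * y * rexp (-y ^ 2 / c))
      (x ^ 2 * rexp (-x ^ 2 / c) - (c / 2) * rexp (-x ^ 2 / c)) x := by
  have h1 : HasDerivAt (fun y : ℝ => -y ^ 2 / c) (-(2 * x) / c) x := by
    simpa using ((hasDerivAt_pow 2 x).neg.div_const c)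
  have hexp : HasDerivAt (fun y : ℝ => rexp (-y ^ 2 / c)) (rexp (-x ^ 2 / c) * (-(2 * x) / c)) x :=
    h1.exp
  have hlin : HasDerivAt (fun y : ℝ => -(c / 2) * y) (-(c / 2)) x := by
    simpa using (hasDerivAt_id x).const_mul (-(c / 2))
  have : HasDerivAt (fun y : ℝ => -(c / 2) * y * rexp (-y ^ 2 / c)) _ x := hlin.mul hexp
  convert this using 1
  field_simp
  ring

lemma tail_sum_le (c : ℝ) (hc : 0 < c) (K : ℕ) :
    ∑ k ∈ Finset.Icc 3 K, ((k : ℝ) ^ 2 * rexp (-(k : ℝ) ^ 2 / c))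
      ≤ 9 / 4 * c + 9 / 16 * Real.sqrt π * (c * Real.sqrt c) := by
  rcases lt_or_ge K 3 with hK | hK
  · rw [Finset.Icc_eq_empty (by omega)]
    simp only [Finset.sum_empty]
    positivity
  have hK3 : (3 : ℝ) ≤ (K : ℝ) := by exact_mod_cast hK
  have hcont : Continuous fun x : ℝ => (9 / 4 : ℝ) * (x ^ 2 * rexp (-x ^ 2 / c)) := by
    continuity
  -- sum ≤ integral over [2, K]
  have hsum : ∑ k ∈ Finset.Icc 3 K, ((k : ℝ) ^ 2 * rexp (-(k : ℝ) ^ 2 / c))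
      ≤ ∫ x in (2 : ℝ)..(K : ℝ), (9 / 4) * (x ^ 2 * rexp (-x ^ 2 / c)) := by
    have hadj : ∑ i ∈ Finset.range (K - 2),
        (∫ x in ((i : ℝ) + 2)..((i : ℝ) + 3), (9 / 4) * (x ^ 2 * rexp (-x ^ 2 / c)))
        = ∫ x in (2 : ℝ)..(K : ℝ), (9 / 4) * (x ^ 2 * rexp (-x ^ 2 / c)) := by
      have := intervalIntegral.sum_integral_adjacent_intervals
        (f := fun x => (9 / 4 : ℝ) * (x ^ 2 * rexp (-x ^ 2 / c))) (μ := volume)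
        (a := fun i : ℕ => (i : ℝ) + 2) (n := K - 2)
        (fun i _ => hcont.intervalIntegrable _ _)
      push_cast [Nat.cast_sub (by omega : 2 ≤ K)] at this
      calc ∑ i ∈ Finset.range (K - 2),
            (∫ x in ((i : ℝ) + 2)..((i : ℝ) + 3), (9 / 4) * (x ^ 2 * rexp (-x ^ 2 / c)))
          = ∑ i ∈ Finset.range (K - 2),
            (∫ x in ((i : ℝ) + 2)..((i : ℝ) + 1 + 2), (9 / 4) * (x ^ 2 * rexp (-x ^ 2 / c))) := by
            apply Finset.sum_congr rfl; intro i _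
            rw [show (i:ℝ) + 1 + 2 = (i:ℝ) + 3 from by ring]
        _ = ∫ x in ((0:ℝ) + 2)..((K : ℝ) - 2 + 2), (9 / 4) * (x ^ 2 * rexp (-x ^ 2 / c)) := this
        _ = ∫ x in (2 : ℝ)..(K : ℝ), (9 / 4) * (x ^ 2 * rexp (-x ^ 2 / c)) := by norm_num
    rw [← hadj, show Finset.Icc 3 K = Finset.Ico 3 (K + 1) by rw [Finset.Ico_add_one_right_eq_Icc],
      Finset.sum_Ico_eq_sum_range, show K + 1 - 3 = K - 2 by omega]
    apply Finset.sum_le_sum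
    intro i _
    have h := step_k c hc (3 + i) (by omega)
    have e1 : ((3 + i : ℕ) : ℝ) = (i : ℝ) + 3 := by push_cast; ring
    rw [e1, show (i:ℝ) + 3 - 1 = (i:ℝ) + 2 from by ring] at h
    rw [e1]
    exact h
  refine hsum.trans ?_
  -- integral bound via FTC
  have hsub : (∫ x in (2:ℝ)..(K:ℝ), (x ^ 2 * rexp (-x ^ 2 / c) - (c / 2) * rexp (-x ^ 2 / c)))
      = (-(c / 2) * (K:ℝ) * rexp (-(K:ℝ) ^ 2 / c)) - (-(c / 2) * 2 * rexp (-(2:ℝ) ^ 2 / c)) := by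
    apply intervalIntegral.integral_eq_sub_of_hasDerivAt (fun x _ => deriv_F c hc x)
    apply Continuous.intervalIntegrable
    continuity
  have hint1 : IntervalIntegrable (fun x : ℝ => x ^ 2 * rexp (-x ^ 2 / c)) volume 2 (K:ℝ) :=
    (by continuity : Continuous fun x : ℝ => x ^ 2 * rexp (-x ^ 2 / c)).intervalIntegrable _ _
  have hint2 : IntervalIntegrable (fun x : ℝ => (c / 2) * rexp (-x ^ 2 / c)) volume 2 (K:ℝ) :=
    (by continuity : Continuous fun x : ℝ => (c / 2) * rexp (-x ^ 2 / c)).intervalIntegrable _ _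
  rw [intervalIntegral.integral_sub hint1 hint2] at hsub
  have hmain : (∫ x in (2:ℝ)..(K:ℝ), x ^ 2 * rexp (-x ^ 2 / c)) ≤ c + c / 4 * Real.sqrt (π * c) := by
    have hgauss : (∫ x in (2:ℝ)..(K:ℝ), (c / 2) * rexp (-x ^ 2 / c))
        ≤ c / 4 * Real.sqrt (π * c) := by
      rw [intervalIntegral.integral_const_mul]
      calc (c / 2) * ∫ x in (2:ℝ)..(K:ℝ), rexp (-x ^ 2 / c)
          ≤ (c / 2) * (Real.sqrt (π * c) / 2) :=
            mul_le_mul_of_nonneg_left (gauss_int_le c hc 2 (K:ℝ) (by norm_num) (by linarith))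
              (by positivity)
        _ = c / 4 * Real.sqrt (π * c) := by ring
    have hFK : -(c / 2) * (K:ℝ) * rexp (-(K:ℝ) ^ 2 / c) ≤ 0 := by
      have : (0:ℝ) ≤ (c / 2) * (K:ℝ) * rexp (-(K:ℝ) ^ 2 / c) := by positivity
      linarith
    have hF2 : -(-(c / 2) * 2 * rexp (-(2:ℝ) ^ 2 / c)) ≤ c := by
      have h1 : rexp (-(2:ℝ) ^ 2 / c) ≤ 1 := Real.exp_le_one_iff.2 (by
        apply div_nonpos_of_nonpos_of_nonneg (by norm_num) hc.le)
      nlinarith [Real.exp_pos (-(2:ℝ) ^ 2 / c)]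
    linarith [hsub, hgauss, hFK, hF2]
  calc (∫ x in (2:ℝ)..(K:ℝ), 9 / 4 * (x ^ 2 * rexp (-x ^ 2 / c)))
      = 9 / 4 * ∫ x in (2:ℝ)..(K:ℝ), (x ^ 2 * rexp (-x ^ 2 / c)) :=
        intervalIntegral.integral_const_mul _ _
    _ ≤ 9 / 4 * (c + c / 4 * Real.sqrt (π * c)) := by
        apply mul_le_mul_of_nonneg_left hmain (by norm_num)
    _ = 9 / 4 * c + 9 / 16 * Real.sqrt π * (c * Real.sqrt c) := by
        rw [Real.sqrt_mul Real.pi_pos.le]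
        ring

lemma exp_neg_le (c d : ℝ) (hc : 0 < c) (hd : 0 < d) : rexp (-d / c) ≤ c / d := by
  rw [show -d / c = -(d / c) by ring, Real.exp_neg]
  rw [inv_le_comm₀ (Real.exp_pos _) (by positivity)]
  calc (c / d)⁻¹ = d / c := by rw [inv_div]
    _ ≤ d / c + 1 := by linarith
    _ ≤ rexp (d / c) := Real.add_one_le_exp _

lemma sum_sq_exp_le (c : ℝ) (hc : 0 < c) (K : ℕ) :
    ∑ k ∈ Finset.Icc 1 K, ((k : ℝ) ^ 2 * rexp (-(k : ℝ) ^ 2 / c))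
      ≤ 17 / 4 * c + 9 / 16 * Real.sqrt π * (c * Real.sqrt c) := by
  have hsub : Finset.Icc 1 K ⊆ insert 1 (insert 2 (Finset.Icc 3 K)) := by
    intro k hk
    simp only [Finset.mem_Icc] at hk
    simp only [Finset.mem_insert, Finset.mem_Icc]
    omega
  calc ∑ k ∈ Finset.Icc 1 K, ((k : ℝ) ^ 2 * rexp (-(k : ℝ) ^ 2 / c))
      ≤ ∑ k ∈ insert 1 (insert 2 (Finset.Icc 3 K)), ((k : ℝ) ^ 2 * rexp (-(k : ℝ) ^ 2 / c)) := by
        apply Finset.sum_le_sum_of_subset_of_nonneg hsub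
        intro k _ _; positivity
    _ = (1 : ℝ) ^ 2 * rexp (-(1:ℝ) ^ 2 / c) + ((2:ℝ) ^ 2 * rexp (-(2:ℝ) ^ 2 / c)
          + ∑ k ∈ Finset.Icc 3 K, ((k : ℝ) ^ 2 * rexp (-(k : ℝ) ^ 2 / c))) := by
        rw [Finset.sum_insert (by simp), Finset.sum_insert (by simp)]
        norm_num
    _ ≤ c + (c + (9 / 4 * c + 9 / 16 * Real.sqrt π * (c * Real.sqrt c))) := by
        gcongr
        · calc (1:ℝ) ^ 2 * rexp (-(1:ℝ) ^ 2 / c) = rexp (-1 / c) := by norm_num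
            _ ≤ c / 1 := exp_neg_le c 1 hc one_pos
            _ = c := by ring
        · calc (2:ℝ) ^ 2 * rexp (-(2:ℝ) ^ 2 / c) = 4 * rexp (-4 / c) := by norm_num
            _ ≤ 4 * (c / 4) := by
                exact mul_le_mul_of_nonneg_left (exp_neg_le c 4 hc (by norm_num)) (by norm_num)
            _ = c := by ring
        · exact tail_sum_le c hc K
    _ = 17 / 4 * c + 9 / 16 * Real.sqrt π * (c * Real.sqrt c) := by ring

/-- For every `σ > 0`, every real `Γ > 0` and every integer `K` with
`1 ≤ K ≤ Γ/2`:
`Σ_{k=1}^{K} [Φ(k/(σ√(Γ−k))) − Φ(k/(σ√(Γ+k)))] ≤ (6/Γ)(2 + 3σ²Γ) = 12/Γ + 18σ²`. -/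
theorem sum_gaussianCDF_diff_le (σ Γ : ℝ) (hσ : 0 < σ) (hΓ : 0 < Γ)
    (K : ℕ) (hK1 : 1 ≤ K) (hK2 : (K : ℝ) ≤ Γ / 2) :
    (∑ k ∈ Finset.Icc 1 K,
        (stdGaussianCDF ((k : ℝ) / (σ * Real.sqrt (Γ - (k : ℝ))))
          - stdGaussianCDF ((k : ℝ) / (σ * Real.sqrt (Γ + (k : ℝ))))))
      ≤ 6 / Γ * (2 + 3 * σ ^ 2 * Γ) ∧
    6 / Γ * (2 + 3 * σ ^ 2 * Γ) = 12 / Γ + 18 * σ ^ 2 := by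
  have heq : 6 / Γ * (2 + 3 * σ ^ 2 * Γ) = 12 / Γ + 18 * σ ^ 2 := by
    field_simp; ring
  refine ⟨?_, heq⟩
  rw [heq]
  set c : ℝ := 3 * σ ^ 2 * Γ with hc
  have hc0 : 0 < c := by positivity
  set r : ℝ := Real.sqrt Γ with hr
  have hr0 : 0 < r := Real.sqrt_pos.2 hΓ
  have hr2 : r ^ 2 = Γ := Real.sq_sqrt hΓ.le
  set u : ℝ := Real.sqrt π with hu
  have hu0 : 0 < u := Real.sqrt_pos.2 Real.pi_pos
  have hu2 : u ^ 2 = π := Real.sq_sqrt Real.pi_pos.le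
  have hu177 : 177 / 100 ≤ u := by nlinarith [Real.pi_gt_d6]
  set s3 : ℝ := Real.sqrt 3 with hs3
  have hs30 : 0 < s3 := Real.sqrt_pos.2 (by norm_num)
  have hs32 : s3 ^ 2 = 3 := Real.sq_sqrt (by norm_num)
  have hs3174 : s3 ≤ 174 / 100 := by nlinarith [Real.sqrt_nonneg 3]
  have hsqrt2pi : Real.sqrt (2 * π) = Real.sqrt 2 * u := Real.sqrt_mul (by norm_num) _
  have hsqrtc : Real.sqrt c = s3 * σ * r := by
    rw [hc, hs3, hr, show 3 * σ ^ 2 * Γ = 3 * (σ ^ 2 * Γ) by ring, Real.sqrt_mul (by norm_num),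
      Real.sqrt_mul (by positivity), Real.sqrt_sq hσ.le]
    ring
  have hs20 : (0:ℝ) < Real.sqrt 2 := Real.sqrt_pos.2 (by norm_num)
  set E : ℝ := 2 * Real.sqrt 2 / (σ * (Γ * r)) * (Real.sqrt (2 * π))⁻¹ with hE
  have hE0 : 0 ≤ E := by positivity
  calc (∑ k ∈ Finset.Icc 1 K,
        (stdGaussianCDF ((k : ℝ) / (σ * Real.sqrt (Γ - (k : ℝ))))
          - stdGaussianCDF ((k : ℝ) / (σ * Real.sqrt (Γ + (k : ℝ))))))
      ≤ ∑ k ∈ Finset.Icc 1 K, E * ((k : ℝ) ^ 2 * rexp (-(k : ℝ) ^ 2 / c)) := by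
        apply Finset.sum_le_sum
        intro k hk
        simp only [Finset.mem_Icc] at hk
        have hkK : (k : ℝ) ≤ (K : ℝ) := by exact_mod_cast hk.2
        have h := term_le σ Γ hσ hΓ k hk.1 (by linarith)
        refine h.trans_eq ?_
        rw [hE]
        ring
    _ = E * ∑ k ∈ Finset.Icc 1 K, ((k : ℝ) ^ 2 * rexp (-(k : ℝ) ^ 2 / c)) := by
        rw [Finset.mul_sum]
    _ ≤ E * (17 / 4 * c + 9 / 16 * u * (c * Real.sqrt c)) :=
        mul_le_mul_of_nonneg_left (sum_sq_exp_le c hc0 K) hE0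
    _ = 51 / (2 * u) * (σ / r) + 27 * s3 / 8 * σ ^ 2 := by
        rw [hsqrtc, hE, hsqrt2pi, hc, ← hr2]
        field_simp
        ring
    _ = (204 * (σ * r) + 27 * (s3 * (u * (r ^ 2 * σ ^ 2)))) / (8 * u * r ^ 2) := by
        field_simp
        ring
    _ ≤ (96 * u + 144 * (u * (r ^ 2 * σ ^ 2))) / (8 * u * r ^ 2) := by
        rw [div_le_div_iff_of_pos_right (by positivity)]
        nlinarith [mul_nonneg hu0.le (sq_nonneg (σ * r - 3 / 5)),
          mul_nonneg (by linarith : (0:ℝ) ≤ u - 177 / 100) (by positivity : (0:ℝ) ≤ σ * r),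
          mul_nonneg (mul_nonneg (by linarith : (0:ℝ) ≤ 174 / 100 - s3) hu0.le)
            (sq_nonneg (σ * r))]
    _ = 12 / Γ + 18 * σ ^ 2 := by
        rw [← hr2]
        field_simp
        ring
end

section
/- With the notation of the context, the inequality 2·inf_{x∈A}[ f(x) + W(x) ] − 2·W(O_1) − h₁ ≥ min_{j∈L} R_j^{(2)} holds. -/
open scoped Classical

namespace FW

/-- `min_{g ∈ G(W)} Σ_{(m→n)∈g} V(O_m,O_n)`. -/
noncomputable def graphMin {l : ℕ} (V : Fin l → Fin l → ℝ) (W : Finset (Fin l)) : ℝ :=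
  sInf ((fun g : Fin l → Fin l => ∑ i ∈ Wᶜ, V i (g i)) '' {g | IsWGraph W g})

lemma exists_isWGraph {l : ℕ} {W : Finset (Fin l)} (hW : W.Nonempty) :
    ∃ g, IsWGraph W g := by
  obtain ⟨w, hw⟩ := hW
  refine ⟨fun i => if i ∈ W then i else w, fun i hi => by simp [hi], fun i hi => ?_⟩
  constructor
  · simp only [if_neg hi]
    rintro rfl; exact hi hw
  · exact ⟨1, by simp [Function.iterate_one, if_neg hi, hw]⟩

lemma graphMin_bddBelow {l : ℕ} (V : Fin l → Fin l → ℝ) (hV : ∀ i j, 0 ≤ V i j)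
    (W : Finset (Fin l)) :
    (0 : ℝ) ∈ lowerBounds ((fun g : Fin l → Fin l => ∑ i ∈ Wᶜ, V i (g i)) '' {g | IsWGraph W g}) := by
  rintro x ⟨g, -, rfl⟩
  exact Finset.sum_nonneg fun i _ => hV _ _

lemma graphMin_nonneg {l : ℕ} (V : Fin l → Fin l → ℝ) (hV : ∀ i j, 0 ≤ V i j)
    {W : Finset (Fin l)} (hW : W.Nonempty) : 0 ≤ graphMin V W := by
  obtain ⟨g, hg⟩ := exists_isWGraph hW
  exact le_csInf ⟨_, ⟨g, hg, rfl⟩⟩ (graphMin_bddBelow V hV W)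

lemma graphMin_le {l : ℕ} (V : Fin l → Fin l → ℝ) (hV : ∀ i j, 0 ≤ V i j)
    {W : Finset (Fin l)} {g : Fin l → Fin l} (hg : IsWGraph W g) :
    graphMin V W ≤ ∑ i ∈ Wᶜ, V i (g i) :=
  csInf_le ⟨0, graphMin_bddBelow V hV W⟩ ⟨g, hg, rfl⟩

/-- key graph lemma: W(O_j) - h₁ ≥ W(O_1 ∪ O_j). -/
lemma key {l : ℕ} (V : Fin l → Fin l → ℝ) (hV : ∀ i j, 0 ≤ V i j)
    {o j : Fin l} (hne : j ≠ o) [Nonempty {m : Fin l // m ≠ o}] :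
    (⨅ m : {m : Fin l // m ≠ o}, V o m.val) + graphMin V {o, j} ≤ graphMin V {j} := by
  obtain ⟨g0, hg0⟩ := exists_isWGraph (W := ({j} : Finset (Fin l))) ⟨j, Finset.mem_singleton_self j⟩
  refine le_csInf ⟨_, Set.mem_image_of_mem _ hg0⟩ ?_
  rintro x ⟨g, hg, rfl⟩
  -- split off the arrow from o
  have ho : o ∈ ({j} : Finset (Fin l))ᶜ := by simp [hne.symm]
  have hsum : ∑ i ∈ ({j} : Finset (Fin l))ᶜ, V i (g i)
      = V o (g o) + ∑ i ∈ (({j} : Finset (Fin l))ᶜ).erase o, V i (g i) :=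
    (Finset.add_sum_erase _ _ ho).symm
  have herase : (({j} : Finset (Fin l))ᶜ).erase o = ({o, j} : Finset (Fin l))ᶜ := by
    ext i; simp [Finset.mem_erase, and_comm]
  set g' : Fin l → Fin l := Function.update g o o with hg'def
  have hgo : g o ≠ o := (hg.2 o (by simp [hne.symm])).1
  have hreach : ∀ n i, g^[n] i = j → ∃ m : ℕ, g'^[m] i ∈ ({o, j} : Finset (Fin l)) := by
    intro n
    induction n with
    | zero => intro i hi; exact ⟨0, by simpa using Or.inr hi⟩
    | succ n ih =>
      intro i hi
      by_cases hio : i = o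
      · exact ⟨0, by simpa using Or.inl hio⟩
      by_cases hij : i = j
      · exact ⟨0, by simpa using Or.inr hij⟩
      · rw [Function.iterate_succ_apply] at hi
        obtain ⟨m, hm⟩ := ih (g i) hi
        refine ⟨m + 1, ?_⟩
        rw [Function.iterate_succ_apply, hg'def, Function.update_of_ne hio]
        exact hm
  have hg' : IsWGraph {o, j} g' := by
    constructor
    · intro i hi
      rcases Finset.mem_insert.mp hi with rfl | hi
      · simp [hg'def]
      · rw [Finset.mem_singleton] at hi
        rw [hg'def, hi, Function.update_of_ne hne]
        exact hg.1 j (Finset.mem_singleton_self j)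
    · intro i hi
      simp only [Finset.mem_insert, Finset.mem_singleton, not_or] at hi
      obtain ⟨hio, hij⟩ := hi
      refine ⟨by rw [hg'def, Function.update_of_ne hio]; exact (hg.2 i (by simp [hij])).1, ?_⟩
      obtain ⟨n, hn⟩ := (hg.2 i (by simp [hij])).2
      rw [Finset.mem_singleton] at hn
      exact hreach n i hn
  show (⨅ m : {m : Fin l // m ≠ o}, V o m.val) + graphMin V {o, j}
      ≤ ∑ i ∈ ({j} : Finset (Fin l))ᶜ, V i (g i)
  rw [hsum, herase]
  gcongr
  · exact ciInf_le ⟨0, by rintro y ⟨m, rfl⟩; exact hV _ _⟩ (⟨g o, hgo⟩ : {m : Fin l // m ≠ o})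
  · calc graphMin V {o, j} ≤ ∑ i ∈ ({o, j} : Finset (Fin l))ᶜ, V i (g' i) := graphMin_le V hV hg'
      _ = ∑ i ∈ ({o, j} : Finset (Fin l))ᶜ, V i (g i) := by
          apply Finset.sum_congr rfl
          intro i hi
          have hio : i ≠ o := by simp at hi; exact hi.1
          rw [hg'def, Function.update_of_ne hio]


/-- Lemma 8.3. With `o` playing the role of the index `1`,
`W(O_j) = graphMin V {j}`, `W(O_1∪O_j) = graphMin V {o,j}`,
`h₁ = min_{ℓ≠1} V(O_1,O_ℓ)`, `W(x) = min_j [W(O_j) + v_j(x)]`, one has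
`2·inf_{x∈A}[f(x) + W(x)] − 2·W(O_1) − h₁ ≥ min_{j∈L} R_j^{(2)}`, where
`R_1^{(2)} = 2·inf_{x∈A}[f(x)+v_1(x)] − h₁` and, for `j ≠ 1`,
`R_j^{(2)} = 2·inf_{x∈A}[f(x)+v_j(x)] + W(O_j) − 2·W(O_1) + W(O_1∪O_j)`. -/
theorem two_inf_W_sub_ge_min_R2 {l : ℕ} (hl : 2 ≤ l) (o : Fin l)
    (V : Fin l → Fin l → ℝ) (hV : ∀ i j, 0 ≤ V i j)
    {A : Type} [Nonempty A]
    (f : A → ℝ) (hf : BddBelow (Set.range f))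
    (v : Fin l → A → ℝ) (hv : ∀ j x, 0 ≤ v j x) :
    2 * (⨅ x : A, (f x + ⨅ j : Fin l, (graphMin V {j} + v j x)))
        - 2 * graphMin V {o} - (⨅ m : {m : Fin l // m ≠ o}, V o m.val)
      ≥ ⨅ j : Fin l,
          (if j = o then
            2 * (⨅ x : A, (f x + v o x)) - (⨅ m : {m : Fin l // m ≠ o}, V o m.val)
          else
            2 * (⨅ x : A, (f x + v j x)) + graphMin V {j}
              - 2 * graphMin V {o} + graphMin V {o, j}) := by
  haveI : Nonempty (Fin l) := ⟨o⟩
  haveI : Nonempty {m : Fin l // m ≠ o} := by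
    obtain ⟨m, hm⟩ := Fintype.exists_ne_of_one_lt_card (by simp; omega) o
    exact ⟨⟨m, hm⟩⟩
  obtain ⟨c, hc⟩ := hf
  have hc' : ∀ x, c ≤ f x := fun x => hc ⟨x, rfl⟩
  set h₁ : ℝ := ⨅ m : {m : Fin l // m ≠ o}, V o m.val with h₁def
  set Wg : Fin l → ℝ := fun j => graphMin V {j} with Wgdef
  set I : Fin l → ℝ := fun j => ⨅ x : A, (f x + v j x) with Idef
  have hWg0 : ∀ j, 0 ≤ Wg j := fun j =>
    graphMin_nonneg V hV ⟨j, Finset.mem_singleton_self j⟩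
  have hIbdd : ∀ j, ∀ x, c ≤ f x + v j x := fun j x =>
    le_add_of_le_of_nonneg (hc' x) (hv j x)
  have hIle : ∀ j x, I j ≤ f x + v j x := fun j x =>
    ciInf_le ⟨c, by rintro y ⟨x, rfl⟩; exact hIbdd j x⟩ x
  -- the minimizer of Wg j + I j
  obtain ⟨j₀, hj₀⟩ := Finite.exists_min (fun j => Wg j + I j)
  set R : Fin l → ℝ := fun j =>
    if j = o then 2 * I o - h₁
    else 2 * I j + Wg j - 2 * Wg o + graphMin V {o, j} with Rdef
  have step1 : ∀ x : A, Wg j₀ + I j₀ ≤ f x + ⨅ j : Fin l, (Wg j + v j x) := by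
    intro x
    obtain ⟨j₁, hj₁⟩ := Finite.exists_min (fun j => Wg j + v j x)
    have h1 : Wg j₁ + v j₁ x ≤ ⨅ j : Fin l, (Wg j + v j x) := le_ciInf hj₁
    calc Wg j₀ + I j₀ ≤ Wg j₁ + I j₁ := hj₀ j₁
      _ ≤ Wg j₁ + (f x + v j₁ x) := by linarith [hIle j₁ x]
      _ = f x + (Wg j₁ + v j₁ x) := by ring
      _ ≤ f x + ⨅ j : Fin l, (Wg j + v j x) := by linarith
  have step2 : Wg j₀ + I j₀ ≤ ⨅ x : A, (f x + ⨅ j : Fin l, (Wg j + v j x)) :=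
    le_ciInf step1
  have step3 : (⨅ j, R j) ≤ R j₀ :=
    ciInf_le (Set.Finite.bddBelow (Set.finite_range R)) j₀
  have step4 : R j₀ ≤ 2 * (Wg j₀ + I j₀) - 2 * Wg o - h₁ := by
    by_cases hjo : j₀ = o
    · subst hjo
      have hR : R j₀ = 2 * I j₀ - h₁ := if_pos rfl
      rw [hR]; linarith
    · have hR : R j₀ = 2 * I j₀ + Wg j₀ - 2 * Wg o + graphMin V {o, j₀} := if_neg hjo
      rw [hR]
      have hkey := key V hV (o := o) (j := j₀) hjo
      linarith
  calc (⨅ j, R j) ≤ R j₀ := step3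
    _ ≤ 2 * (Wg j₀ + I j₀) - 2 * Wg o - h₁ := step4
    _ ≤ 2 * (⨅ x : A, (f x + ⨅ j : Fin l, (Wg j + v j x))) - 2 * Wg o - h₁ := by
        linarith

end FW
end
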